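/- arXiv:2011.04083 — 3 statements merged into one kernel-verified Lean document; each statement's English description precedes it below -/
import Mathlib

section
/- Let d be a quasi-metric on a set Ω with quasi-metric constant κ (i.e., d is symmetric, positive, and d(x,y) ≤ κ(d(x,z) + d(z,y)) for all x,y,z). Fix x₁ ∈ Ω. Then the function d̃(x,y) = d(x,y)/(d(x,x₁)·d(y,x₁)) defined on Ω \ {x₁} is a quasi-metric with quasi-metric constant 4κ². -/
/-- Hansen–Netuka / Pinchover lemma on punctured quasi-metric spaces:
if `d` is a quasi-metric on `Ω` with constant `κ`, and `x₁ ∈ Ω`, then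
`d̃ x y = d x y / (d x x₁ * d y x₁)` is a quasi-metric on `Ω \ {x₁}` with
constant `4 κ ^ 2`. -/
theorem punctured_quasi_metric {Ω : Type*} (d : Ω → Ω → ℝ) (κ : ℝ) (hκ : 0 < κ)
    (hsymm : ∀ x y, d x y = d y x)
    (hpos : ∀ x y, 0 < d x y)
    (htri : ∀ x y z, d x y ≤ κ * (d x z + d z y))
    (x₁ : Ω) :
    (∀ x y, x ≠ x₁ → y ≠ x₁ →
        d x y / (d x x₁ * d y x₁) = d y x / (d y x₁ * d x x₁)) ∧
    (∀ x y, x ≠ x₁ → y ≠ x₁ → 0 < d x y / (d x x₁ * d y x₁)) ∧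
    (∀ x y z, x ≠ x₁ → y ≠ x₁ → z ≠ x₁ →
        d x y / (d x x₁ * d y x₁) ≤
          4 * κ ^ 2 * (d x z / (d x x₁ * d z x₁) + d z y / (d z x₁ * d y x₁))) := by
  refine ⟨fun x y _ _ => by rw [hsymm x y, mul_comm],
    fun x y _ _ => div_pos (hpos x y) (mul_pos (hpos x x₁) (hpos y x₁)),
    fun x y z _ _ _ => ?_⟩
  set a := d x x₁ with ha
  set b := d y x₁ with hb
  set c := d z x₁ with hc
  set p := d x z with hp
  set q := d z y with hq
  set r := d x y with hr
  have hav : 0 < a := hpos x x₁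
  have hbv : 0 < b := hpos y x₁
  have hcv : 0 < c := hpos z x₁
  have hpv : 0 < p := hpos x z
  have hqv : 0 < q := hpos z y
  have hrv : 0 < r := hpos x y
  have hr1 : r ≤ κ * (p + q) := htri x y z
  have hr2 : r ≤ κ * (a + b) := by
    have := htri x y x₁
    rwa [← hsymm y x₁] at this
  have hc1 : c ≤ κ * (p + a) := by
    have := htri z x₁ x
    rwa [← hsymm x z] at this
  have hc2 : c ≤ κ * (q + b) := htri z x₁ y
  have key : r * c ≤ 4 * κ ^ 2 * (p * b + q * a) := by
    rcases le_or_gt c (2 * κ * a) with h1 | h1 <;> rcases le_or_gt c (2 * κ * b) with h2 | h2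
    · -- c ≤ 2κa, c ≤ 2κb : use r ≤ κ(p+q)
      nlinarith [mul_le_mul_of_nonneg_left h2 (mul_pos hκ hpv).le,
        mul_le_mul_of_nonneg_left h1 (mul_pos hκ hqv).le,
        mul_le_mul_of_nonneg_right hr1 hcv.le]
    · -- c ≤ 2κa, c > 2κb : then b < q and c < 2κq ; use r ≤ κ(a+b)
      have hbq : b < q := by nlinarith
      have hcq : c < 2 * κ * q := by nlinarith
      nlinarith [mul_le_mul_of_nonneg_right hr2 hcv.le,
        mul_le_mul_of_nonneg_left hcq.le (mul_pos hκ hav).le,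
        mul_le_mul_of_nonneg_left h1 (mul_pos hκ hbv).le,
        mul_le_mul_of_nonneg_left hbq.le (mul_pos (mul_pos hκ hκ) hav).le,
        mul_pos (mul_pos (mul_pos hκ hκ) hpv) hbv]
    · -- c > 2κa, c ≤ 2κb : then a < p and c < 2κp ; use r ≤ κ(a+b)
      have hap : a < p := by nlinarith
      have hcp : c < 2 * κ * p := by nlinarith
      nlinarith [mul_le_mul_of_nonneg_right hr2 hcv.le,
        mul_le_mul_of_nonneg_left hcp.le (mul_pos hκ hbv).le,
        mul_le_mul_of_nonneg_left h2 (mul_pos hκ hav).le,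
        mul_le_mul_of_nonneg_left hap.le (mul_pos (mul_pos hκ hκ) hbv).le,
        mul_pos (mul_pos (mul_pos hκ hκ) hqv) hav]
    · -- c > 2κa, c > 2κb : a<p, b<q, c<2κp, c<2κq ; use r ≤ κ(a+b)
      have hcq : c < 2 * κ * q := by nlinarith
      have hcp : c < 2 * κ * p := by nlinarith
      nlinarith [mul_le_mul_of_nonneg_right hr2 hcv.le,
        mul_le_mul_of_nonneg_left hcq.le (mul_pos hκ hav).le,
        mul_le_mul_of_nonneg_left hcp.le (mul_pos hκ hbv).le]
  rw [div_add_div _ _ (mul_pos hav hcv).ne' (mul_pos hcv hbv).ne', ← mul_div_assoc,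
    div_le_div_iff₀ (mul_pos hav hbv) (mul_pos (mul_pos hav hcv) (mul_pos hcv hbv))]
  have hκ2 : 0 < κ ^ 2 := by positivity
  nlinarith [mul_le_mul_of_nonneg_left key (mul_pos (mul_pos hav hbv) hcv).le,
    mul_pos (mul_pos hav hbv) hcv, sq_nonneg c]
end

section
/- Let (Ω, ω) be a measure space and K a symmetric measurable kernel on Ω × Ω with values in (0,∞] such that K(x,y)/(m(x)m(y)) is a quasi-metric kernel with constant κ, for some measurable m: Ω → (0,∞). Define T h(x) = ∫_Ω K(x,y) h(y) dω(y). Then there exists c > 0 depending only on κ such that ∑_{j=0}^∞ T^j m(x) ≥ m(x) · exp(c · T m(x)/m(x)) for all x ∈ Ω. -/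
open MeasureTheory ENNReal
open Nat

/-- Extended exponential: `expE t = e^t` for finite `t`, and `∞` for `t = ∞`. -/
noncomputable def expE (t : ℝ≥0∞) : ℝ≥0∞ :=
  if t = ∞ then ∞ else ENNReal.ofReal (Real.exp t.toReal)

lemma lintegral_pi_prod {Ω : Type*} [MeasurableSpace Ω] (μ : Measure Ω) [SigmaFinite μ]
    (h : Ω → ℝ≥0∞) (hh : Measurable h) (n : ℕ) :
    ∫⁻ y : Fin n → Ω, ∏ i, h (y i) ∂(Measure.pi fun _ => μ) = (∫⁻ z, h z ∂μ) ^ n := by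
  induction n with
  | zero =>
      simp [lintegral_const, Measure.pi_univ]
  | succ n ih =>
      have mp := measurePreserving_piFinSuccAbove (fun _ : Fin (n+1) => μ) 0
      have hmeasF : Measurable (fun p : Ω × (Fin n → Ω) => h p.1 * ∏ j, h (p.2 j)) := by
        exact (hh.comp measurable_fst).mul
          (Finset.measurable_prod _ fun j _ =>
            hh.comp ((measurable_pi_apply j).comp measurable_snd))
      calc ∫⁻ y : Fin (n+1) → Ω, ∏ i, h (y i) ∂(Measure.pi fun _ => μ)
          = ∫⁻ y : Fin (n+1) → Ω,
              (fun p : Ω × (Fin n → Ω) => h p.1 * ∏ j, h (p.2 j))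
                ((MeasurableEquiv.piFinSuccAbove (fun _ => Ω) 0) y)
              ∂(Measure.pi fun _ => μ) := by
            refine lintegral_congr fun y => ?_
            simp only [MeasurableEquiv.piFinSuccAbove_apply]
            exact Fin.prod_univ_succAbove (fun i => h (y i)) 0
        _ = ∫⁻ p : Ω × (Fin n → Ω), h p.1 * ∏ j, h (p.2 j)
              ∂((μ).prod (Measure.pi fun _ => μ)) := mp.lintegral_comp hmeasF
        _ = ∫⁻ z, ∫⁻ w : Fin n → Ω, h z * ∏ j, h (w j) ∂(Measure.pi fun _ => μ) ∂μ :=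
            lintegral_prod _ hmeasF.aemeasurable
        _ = ∫⁻ z, h z * (∫⁻ z', h z' ∂μ) ^ n ∂μ := by
            refine lintegral_congr fun z => ?_
            have hm : Measurable (fun w : Fin n → Ω => ∏ j, h (w j)) :=
              Finset.measurable_prod _ fun j _ => hh.comp (measurable_pi_apply j)
            rw [lintegral_const_mul (h z) hm, ih]
        _ = (∫⁻ z, h z ∂μ) ^ (n + 1) := by
            rw [lintegral_mul_const _ hh, pow_succ, mul_comm]


lemma key_ineq {Ω : Type*} [MeasurableSpace Ω] (μ : Measure Ω) [SigmaFinite μ]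
    (g : Ω → ℝ≥0∞) (hg : Measurable g) (n : ℕ) :
    (∫⁻ z, g z ∂μ) ^ (n + 1) ≤
      (n + 1 : ℕ) * ∫⁻ z, g z * (∫⁻ w, min (g z) (g w) ∂μ) ^ n ∂μ := by
  set P : Measure (Fin (n+1) → Ω) := Measure.pi (fun _ => μ) with hP
  have hterm_meas : ∀ k : Fin (n+1), Measurable (fun y : Fin (n+1) → Ω =>
      g (y k) * ∏ j : Fin n, min (g (y k)) (g (y (k.succAbove j)))) := by
    intro k
    exact (hg.comp (measurable_pi_apply k)).mul
      (Finset.measurable_prod _ fun j _ =>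
        ((hg.comp (measurable_pi_apply k)).min (hg.comp (measurable_pi_apply _))))
  have hpt : ∀ y : Fin (n+1) → Ω, (∏ i, g (y i)) ≤
      ∑ k : Fin (n+1), g (y k) * ∏ j : Fin n, min (g (y k)) (g (y (k.succAbove j))) := by
    intro y
    obtain ⟨k, hk⟩ := Finite.exists_max (fun i : Fin (n+1) => g (y i))
    have hkeq : g (y k) * ∏ j : Fin n, min (g (y k)) (g (y (k.succAbove j)))
        = ∏ i, g (y i) := by
      rw [Fin.prod_univ_succAbove (fun i => g (y i)) k]
      congr 1
      exact Finset.prod_congr rfl fun j _ => min_eq_right (hk _)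
    calc (∏ i, g (y i)) = _ := hkeq.symm
      _ ≤ _ := Finset.single_le_sum (f := fun k => g (y k) *
          ∏ j : Fin n, min (g (y k)) (g (y (k.succAbove j))))
          (fun _ _ => _root_.zero_le) (Finset.mem_univ k)
  have hsplit : ∀ k : Fin (n+1),
      ∫⁻ y, g (y k) * ∏ j : Fin n, min (g (y k)) (g (y (k.succAbove j))) ∂P
        = ∫⁻ z, g z * (∫⁻ w, min (g z) (g w) ∂μ) ^ n ∂μ := by
    intro k
    have mp := measurePreserving_piFinSuccAbove (fun _ : Fin (n+1) => μ) k
    have hmeasF : Measurable (fun p : Ω × (Fin n → Ω) =>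
        g p.1 * ∏ j, min (g p.1) (g (p.2 j))) := by
      exact (hg.comp measurable_fst).mul
        (Finset.measurable_prod _ fun j _ =>
          ((hg.comp measurable_fst).min
            (hg.comp ((measurable_pi_apply j).comp measurable_snd))))
    calc ∫⁻ y, g (y k) * ∏ j : Fin n, min (g (y k)) (g (y (k.succAbove j))) ∂P
        = ∫⁻ y, (fun p : Ω × (Fin n → Ω) => g p.1 * ∏ j, min (g p.1) (g (p.2 j)))
            ((MeasurableEquiv.piFinSuccAbove (fun _ => Ω) k) y) ∂P := by
          refine lintegral_congr fun y => ?_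
          simp only [MeasurableEquiv.piFinSuccAbove_apply, Fin.insertNthEquiv,
            Equiv.symm, Equiv.coe_fn_mk, Fin.removeNth]
      _ = ∫⁻ p : Ω × (Fin n → Ω), g p.1 * ∏ j, min (g p.1) (g (p.2 j))
            ∂(μ.prod (Measure.pi fun _ => μ)) := mp.lintegral_comp hmeasF
      _ = ∫⁻ z, ∫⁻ w : Fin n → Ω, g z * ∏ j, min (g z) (g (w j))
            ∂(Measure.pi fun _ => μ) ∂μ := lintegral_prod _ hmeasF.aemeasurable
      _ = ∫⁻ z, g z * (∫⁻ w, min (g z) (g w) ∂μ) ^ n ∂μ := by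
          refine lintegral_congr fun z => ?_
          have hm : Measurable (fun w : Fin n → Ω => ∏ j, min (g z) (g (w j))) :=
            Finset.measurable_prod _ fun j _ =>
              (measurable_const.min (hg.comp (measurable_pi_apply j)))
          rw [lintegral_const_mul (g z) hm,
            lintegral_pi_prod μ (fun w => min (g z) (g w)) (measurable_const.min hg) n]
  calc (∫⁻ z, g z ∂μ) ^ (n + 1)
      = ∫⁻ y : Fin (n+1) → Ω, ∏ i, g (y i) ∂P := (lintegral_pi_prod μ g hg (n+1)).symm
    _ ≤ ∫⁻ y, ∑ k : Fin (n+1), g (y k) *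
          ∏ j : Fin n, min (g (y k)) (g (y (k.succAbove j))) ∂P := lintegral_mono hpt
    _ = ∑ k : Fin (n+1), ∫⁻ y, g (y k) *
          ∏ j : Fin n, min (g (y k)) (g (y (k.succAbove j))) ∂P :=
        lintegral_finset_sum _ (fun k _ => hterm_meas k)
    _ = (n + 1 : ℕ) * ∫⁻ z, g z * (∫⁻ w, min (g z) (g w) ∂μ) ^ n ∂μ := by
        rw [Finset.sum_congr rfl fun k _ => hsplit k, Finset.sum_const, Finset.card_univ,
          Fintype.card_fin, nsmul_eq_mul]


lemma expE_le_tsum (t : ℝ≥0∞) : expE t ≤ ∑' n : ℕ, t ^ n / (n ! : ℝ≥0∞) := by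
  by_cases ht : t = ∞
  · have h1 : t ^ 1 / ((1 ! : ℕ) : ℝ≥0∞) ≤ ∑' n : ℕ, t ^ n / (n ! : ℝ≥0∞) :=
      ENNReal.le_tsum 1
    simp only [pow_one, Nat.factorial_one, Nat.cast_one, div_one] at h1
    exact le_trans (by rw [expE, if_pos ht, ht]) h1
  · rw [expE, if_neg ht]
    have hsum : ∑' n : ℕ, t ^ n / (n ! : ℝ≥0∞)
        = ∑' n : ℕ, ENNReal.ofReal (t.toReal ^ n / n !) := by
      refine tsum_congr fun n => ?_
      rw [ENNReal.ofReal_div_of_pos (by exact_mod_cast n.factorial_pos),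
        ENNReal.ofReal_pow ENNReal.toReal_nonneg, ENNReal.ofReal_toReal ht,
        ENNReal.ofReal_natCast]
    rw [hsum, ← ENNReal.ofReal_tsum_of_nonneg (fun n => by positivity)
      (Real.summable_pow_div_factorial _)]
    apply ENNReal.ofReal_le_ofReal
    rw [Real.exp_eq_exp_ℝ, NormedSpace.exp_eq_tsum_div]



lemma key_capped {Ω : Type*} [MeasurableSpace Ω] (μ : Measure Ω) [SigmaFinite μ]
    (f : Ω → ℝ≥0∞) (hf : Measurable f) (t : ℝ≥0∞) (n : ℕ) :
    (∫⁻ z, min t (f z) ∂μ) ^ (n + 1) ≤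
      (n + 1 : ℕ) * ∫⁻ z, min t (f z) * (∫⁻ w, min (f z) (f w) ∂μ) ^ n ∂μ := by
  refine le_trans (key_ineq μ (fun z => min t (f z)) (measurable_const.min hf) n) ?_
  refine mul_le_mul_right (lintegral_mono fun z => mul_le_mul_right ?_ _) _
  exact pow_le_pow_left'
    (lintegral_mono fun w => min_le_min (min_le_right _ _) (min_le_right _ _)) n




/-- Lower exponential bound for the Neumann series (Theorem FNV, part (B)):
if `K` is quasi-metrically modifiable with modifier `m` and quasi-metric constant `κ`,
then `∑_{j=0}^∞ T^j m (x) ≥ m(x) · exp (c · T m(x) / m(x))` for all `x`,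
with `c > 0` depending only on `κ`. -/
theorem neumann_series_exp_lower_bound {Ω : Type*} [MeasurableSpace Ω] (ω : Measure Ω)
    (K : Ω → Ω → ℝ≥0∞) (m : Ω → ℝ≥0∞) (κ : ℝ) (hκ : 0 < κ)
    (hKmeas : Measurable (Function.uncurry K))
    (hmmeas : Measurable m)
    (hmpos : ∀ x, 0 < m x) (hmfin : ∀ x, m x < ∞)
    (hKsymm : ∀ x y, K x y = K y x)
    (hKpos : ∀ x y, 0 < K x y)
    (htri : ∀ x y z,
      (K x y / (m x * m y))⁻¹.toReal ≤
        κ * ((K x z / (m x * m z))⁻¹.toReal + (K z y / (m z * m y))⁻¹.toReal))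
    (T : (Ω → ℝ≥0∞) → (Ω → ℝ≥0∞))
    (hT : ∀ h x, T h x = ∫⁻ y, K x y * h y ∂ω) :
    ∃ c : ℝ, 0 < c ∧ ∀ x : Ω,
      m x * expE (ENNReal.ofReal c * (T m x / m x)) ≤ ∑' j : ℕ, (T^[j] m) x := by
  classical
  set κ' : ℝ := max κ 1 with hκ'def
  have hκ'1 : 1 ≤ κ' := le_max_right _ _
  have hκ'pos : 0 < κ' := lt_of_lt_of_le one_pos hκ'1
  refine ⟨1 / (2 * κ'), by positivity, fun x => ?_⟩
  set c : ℝ := 1 / (2 * κ') with hcdef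
  have hcpos : 0 < c := by positivity
  set β : ℝ≥0∞ := ENNReal.ofReal c with hβdef
  have hβtop : β ≠ ∞ := ofReal_ne_top
  have hβle : β ≤ 1 := by
    rw [hβdef]
    refine ENNReal.ofReal_le_one.mpr ?_
    rw [hcdef, div_le_one (by positivity)]
    linarith
  -- modified kernel
  set Kt : Ω → Ω → ℝ≥0∞ := fun a b => K a b / (m a * m b) with hKtdef
  have hmne : ∀ a b : Ω, m a * m b ≠ 0 ∧ m a * m b ≠ ∞ := fun a b =>
    ⟨mul_ne_zero (hmpos a).ne' (hmpos b).ne',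
      mul_ne_top (hmfin a).ne (hmfin b).ne⟩
  have hKtpos : ∀ a b, 0 < Kt a b := fun a b =>
    ENNReal.div_pos (hKpos a b).ne' (hmne a b).2
  have hKtsymm : ∀ a b, Kt a b = Kt b a := fun a b => by
    simp only [hKtdef]; rw [hKsymm, mul_comm]
  have hKeq : ∀ a b, K a b = Kt a b * (m a * m b) := fun a b => by
    simp only [hKtdef]
    rw [ENNReal.div_mul_cancel (hmne a b).1 (hmne a b).2]
  have htri' : ∀ p q r, (Kt p q)⁻¹.toReal ≤
      κ * ((Kt p r)⁻¹.toReal + (Kt r q)⁻¹.toReal) := fun p q r => htri p q r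
  -- the chain inequality
  have chain : ∀ p q r, β * min (Kt p r) (Kt r q) ≤ Kt p q := by
    intro p q r
    by_cases hpq : Kt p q = ∞
    · exact hpq ▸ le_top
    set M : ℝ≥0∞ := min (Kt p r) (Kt r q) with hMdef
    have hMpos : 0 < M := lt_min (hKtpos p r) (hKtpos r q)
    by_cases hM : M = ∞
    · exfalso
      have h1 : Kt p r = ∞ := by
        have := min_le_left (Kt p r) (Kt r q); rw [← hMdef, hM] at this
        exact top_le_iff.mp this
      have h2 : Kt r q = ∞ := by
        have := min_le_right (Kt p r) (Kt r q); rw [← hMdef, hM] at this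
        exact top_le_iff.mp this
      have h3 := htri' p q r
      rw [h1, h2] at h3
      simp only [ENNReal.inv_top, ENNReal.toReal_zero, add_zero, mul_zero] at h3
      have hpq' : 0 < (Kt p q)⁻¹.toReal := by
        refine ENNReal.toReal_pos (ENNReal.inv_ne_zero.mpr hpq) ?_
        exact ENNReal.inv_ne_top.mpr (hKtpos p q).ne'
      linarith
    -- M finite
    have hs : 0 < M.toReal := ENNReal.toReal_pos hMpos.ne' hM
    have hr0 : 0 < (Kt p q).toReal := ENNReal.toReal_pos (hKtpos p q).ne' hpq
    have hdpr : (Kt p r)⁻¹.toReal ≤ M.toReal⁻¹ := by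
      rw [← ENNReal.toReal_inv]
      exact ENNReal.toReal_mono (ENNReal.inv_ne_top.mpr hMpos.ne')
        (ENNReal.inv_le_inv' (min_le_left _ _))
    have hdrq : (Kt r q)⁻¹.toReal ≤ M.toReal⁻¹ := by
      rw [← ENNReal.toReal_inv]
      exact ENNReal.toReal_mono (ENNReal.inv_ne_top.mpr hMpos.ne')
        (ENNReal.inv_le_inv' (min_le_right _ _))
    have hmain : (Kt p q).toReal⁻¹ ≤ 2 * κ' * M.toReal⁻¹ := by
      rw [← ENNReal.toReal_inv]
      calc (Kt p q)⁻¹.toReal ≤ κ * ((Kt p r)⁻¹.toReal + (Kt r q)⁻¹.toReal) := htri' p q r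
        _ ≤ κ' * (M.toReal⁻¹ + M.toReal⁻¹) := by
            apply mul_le_mul (le_max_left _ _) (by linarith) ?_ (le_of_lt hκ'pos)
            have := ENNReal.toReal_nonneg (a := (Kt p r)⁻¹)
            have := ENNReal.toReal_nonneg (a := (Kt r q)⁻¹)
            linarith
        _ = 2 * κ' * M.toReal⁻¹ := by ring
    have hsr : M.toReal ≤ 2 * κ' * (Kt p q).toReal := by
      rw [show (Kt p q).toReal⁻¹ = 1 / (Kt p q).toReal by rw [one_div],
        show (2:ℝ) * κ' * M.toReal⁻¹ = (2 * κ') / M.toReal by rw [div_eq_mul_inv],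
        div_le_div_iff₀ hr0 hs] at hmain
      linarith [hmain]
    calc β * M = ENNReal.ofReal c * ENNReal.ofReal M.toReal := by
          rw [hβdef, ENNReal.ofReal_toReal hM]
      _ = ENNReal.ofReal (c * M.toReal) := (ENNReal.ofReal_mul hcpos.le).symm
      _ ≤ ENNReal.ofReal ((Kt p q).toReal) := by
          apply ENNReal.ofReal_le_ofReal
          rw [hcdef]
          rw [div_mul_eq_mul_div, one_mul, div_le_iff₀ (by positivity)]
          calc M.toReal ≤ 2 * κ' * (Kt p q).toReal := hsr
            _ = (Kt p q).toReal * (2 * κ') := by ring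
      _ = Kt p q := ENNReal.ofReal_toReal hpq
  -- fix x
  set μ : Measure Ω := ω.withDensity (fun z => m z * m z) with hμdef
  set f : Ω → ℝ≥0∞ := fun z => Kt x z with hfdef
  have hfmeas : Measurable f := by
    have h1 : Measurable fun z => K x z := hKmeas.comp measurable_prodMk_left
    exact h1.div (measurable_const.mul hmmeas)
  have hfpos : ∀ z, 0 < f z := fun z => hKtpos x z
  have hωμ : ∀ g : Ω → ℝ≥0∞, ∫⁻ z, g z ∂μ = ∫⁻ z, (m z * m z) * g z ∂ω := by
    intro g
    rw [hμdef, lintegral_withDensity_eq_lintegral_mul_non_measurable ω (f := fun z => m z * m z)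
      (hmmeas.mul hmmeas) (ae_of_all _ fun z => mul_lt_top (hmfin z) (hmfin z))]
    rfl
  set u : ℝ≥0∞ := ∫⁻ z, f z ∂μ with hudef
  have hTm : T m x = m x * u := by
    rw [hT, hudef, hωμ]
    rw [← lintegral_const_mul' (m x) _ (hmfin x).ne]
    refine lintegral_congr fun z => ?_
    rw [hKeq x z]
    simp only [hfdef]
    ring
  -- trivial case : T m x = ∞
  by_cases hTtop : T m x = ∞
  · have htop : (∑' j : ℕ, (T^[j] m) x) = ∞ := by
      rw [eq_top_iff]
      calc (⊤ : ℝ≥0∞) = T m x := hTtop.symm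
        _ = (T^[1] m) x := by rw [Function.iterate_one]
        _ ≤ ∑' j : ℕ, (T^[j] m) x := ENNReal.le_tsum 1
    rw [htop]; exact le_top
  -- main case
  have hufin : u ≠ ∞ := by
    intro hu
    rw [hTm, hu] at hTtop
    exact hTtop (ENNReal.mul_top (hmpos x).ne')
  have hudiv : T m x / m x = u := by
    rw [hTm, mul_comm, mul_div_assoc, ENNReal.div_self (hmpos x).ne' (hmfin x).ne, mul_one]
  -- sigma-finiteness
  haveI hsf : SigmaFinite μ := by
    apply Measure.sigmaFinite_of_countable
      (Set.countable_range fun n : ℕ => {y | (n : ℝ≥0∞)⁻¹ < f y})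
    · rintro s ⟨n, rfl⟩
      have hsub : {y | (n : ℝ≥0∞)⁻¹ < f y} ⊆ {y | (n : ℝ≥0∞)⁻¹ ≤ f y} :=
        fun y hy => by
          simp only [Set.mem_setOf_eq] at hy ⊢
          exact hy.le
      have hb := mul_meas_ge_le_lintegral₀ (μ := μ) hfmeas.aemeasurable ((n : ℝ≥0∞)⁻¹)
      rw [← hudef] at hb
      rcases Nat.eq_zero_or_pos n with hn | hn
      · subst hn
        have hempty : {y | ((0:ℕ) : ℝ≥0∞)⁻¹ < f y} = ∅ := by
          refine Set.eq_empty_of_forall_notMem fun y hy => ?_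
          simp only [Nat.cast_zero, ENNReal.inv_zero, Set.mem_setOf_eq] at hy
          exact not_top_lt hy
        show μ {y | ((0:ℕ) : ℝ≥0∞)⁻¹ < f y} < ⊤
        rw [hempty]
        simp
      · have hn0 : ((n : ℝ≥0∞))⁻¹ ≠ 0 := by
          simp [ENNReal.inv_ne_zero]
        calc μ {y | (n : ℝ≥0∞)⁻¹ < f y} ≤ μ {y | (n : ℝ≥0∞)⁻¹ ≤ f y} := measure_mono hsub
          _ = ((n : ℝ≥0∞)⁻¹)⁻¹ * ((n : ℝ≥0∞)⁻¹ * μ {y | (n : ℝ≥0∞)⁻¹ ≤ f y}) := by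
              rw [← mul_assoc, ENNReal.inv_mul_cancel hn0 (ENNReal.inv_ne_top.mpr
                (by exact_mod_cast hn.ne')), one_mul]
          _ ≤ ((n : ℝ≥0∞)⁻¹)⁻¹ * u := mul_le_mul_right hb _
          _ < ∞ := by
              rw [inv_inv]
              exact ENNReal.mul_lt_top (ENNReal.natCast_lt_top n)
                (lt_top_iff_ne_top.mpr hufin)
    · rw [Set.sUnion_range]
      refine Set.eq_univ_of_forall fun y => ?_
      obtain ⟨n, hn⟩ := ENNReal.exists_inv_nat_lt (hfpos y).ne'
      exact Set.mem_iUnion.mpr ⟨n, hn⟩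
  
  -- factorial facts
  have hfactne : ∀ j : ℕ, ((j ! : ℕ) : ℝ≥0∞) ≠ 0 ∧ ((j ! : ℕ) : ℝ≥0∞) ≠ ∞ :=
    fun j => ⟨Nat.cast_ne_zero.mpr (Nat.factorial_ne_zero j), natCast_ne_top _⟩
  have hSne : ∀ j : ℕ, ((j + 1 : ℕ) : ℝ≥0∞) ≠ 0 ∧ ((j + 1 : ℕ) : ℝ≥0∞) ≠ ∞ :=
    fun j => ⟨Nat.cast_ne_zero.mpr (Nat.succ_ne_zero j), natCast_ne_top _⟩
  have hfactsucc : ∀ j : ℕ, (((j + 1) ! : ℕ) : ℝ≥0∞) = ((j + 1 : ℕ) : ℝ≥0∞) * ((j ! : ℕ) : ℝ≥0∞) :=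
    fun j => by rw [Nat.factorial_succ, Nat.cast_mul]
  -- the generic lower bound for one application of T
  have bound1 : ∀ (j : ℕ),
      (∀ z, m z * (β ^ j * (∫⁻ w, min (f z) (f w) ∂μ) ^ j) ≤ ((j ! : ℕ) : ℝ≥0∞) * T^[j] m z) →
      ∀ y, (((j ! : ℕ) : ℝ≥0∞))⁻¹ * β ^ j * m y *
          (∫⁻ z, Kt y z * (∫⁻ w, min (f z) (f w) ∂μ) ^ j ∂μ)
        ≤ ∫⁻ z, K y z * T^[j] m z ∂ω := by
    intro j hcm y
    have hC : (((j ! : ℕ) : ℝ≥0∞))⁻¹ * β ^ j * m y ≠ ∞ := by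
      exact mul_ne_top (mul_ne_top (ENNReal.inv_ne_top.mpr (hfactne j).1)
        (pow_ne_top hβtop)) (hmfin y).ne
    have hpt : ∀ z, (((j ! : ℕ) : ℝ≥0∞))⁻¹ * (m z * (β ^ j * (∫⁻ w, min (f z) (f w) ∂μ) ^ j))
        ≤ T^[j] m z := by
      intro z
      calc (((j ! : ℕ) : ℝ≥0∞))⁻¹ * (m z * (β ^ j * (∫⁻ w, min (f z) (f w) ∂μ) ^ j))
          ≤ (((j ! : ℕ) : ℝ≥0∞))⁻¹ * (((j ! : ℕ) : ℝ≥0∞) * T^[j] m z) :=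
            mul_le_mul_right (hcm z) _
        _ = T^[j] m z := by
            rw [← mul_assoc, ENNReal.inv_mul_cancel (hfactne j).1 (hfactne j).2, one_mul]
    calc (((j ! : ℕ) : ℝ≥0∞))⁻¹ * β ^ j * m y *
          (∫⁻ z, Kt y z * (∫⁻ w, min (f z) (f w) ∂μ) ^ j ∂μ)
        = (((j ! : ℕ) : ℝ≥0∞))⁻¹ * β ^ j * m y *
            (∫⁻ z, (m z * m z) * (Kt y z * (∫⁻ w, min (f z) (f w) ∂μ) ^ j) ∂ω) := by
          rw [hωμ]
      _ = ∫⁻ z, (((j ! : ℕ) : ℝ≥0∞))⁻¹ * β ^ j * m y *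
            ((m z * m z) * (Kt y z * (∫⁻ w, min (f z) (f w) ∂μ) ^ j)) ∂ω :=
          (lintegral_const_mul' _ _ hC).symm
      _ = ∫⁻ z, K y z *
            ((((j ! : ℕ) : ℝ≥0∞))⁻¹ * (m z * (β ^ j * (∫⁻ w, min (f z) (f w) ∂μ) ^ j))) ∂ω := by
          refine lintegral_congr fun z => ?_
          rw [hKeq y z]
          ring
      _ ≤ ∫⁻ z, K y z * T^[j] m z ∂ω :=
          lintegral_mono fun z => mul_le_mul_right (hpt z) _
  -- main induction on iterates, relative to the capped potential
  have claimMain : ∀ (j : ℕ) (y : Ω),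
      m y * (β ^ j * (∫⁻ w, min (f y) (f w) ∂μ) ^ j) ≤ ((j ! : ℕ) : ℝ≥0∞) * T^[j] m y := by
    intro j
    induction j with
    | zero => intro y; simp
    | succ n ih =>
      intro y
      have h3 := key_capped μ f hfmeas (f y) n
      have hstep1 : (((n + 1 : ℕ) : ℝ≥0∞))⁻¹ * (∫⁻ w, min (f y) (f w) ∂μ) ^ (n + 1)
          ≤ ∫⁻ z, min (f y) (f z) * (∫⁻ w, min (f z) (f w) ∂μ) ^ n ∂μ := by
        calc (((n + 1 : ℕ) : ℝ≥0∞))⁻¹ * (∫⁻ w, min (f y) (f w) ∂μ) ^ (n + 1)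
            ≤ (((n + 1 : ℕ) : ℝ≥0∞))⁻¹ * (((n + 1 : ℕ) : ℝ≥0∞) *
                ∫⁻ z, min (f y) (f z) * (∫⁻ w, min (f z) (f w) ∂μ) ^ n ∂μ) :=
              mul_le_mul_right h3 _
          _ = _ := by
              rw [← mul_assoc, ENNReal.inv_mul_cancel (hSne n).1 (hSne n).2, one_mul]
      have hchain : ∀ z, β * (min (f y) (f z) * (∫⁻ w, min (f z) (f w) ∂μ) ^ n)
          ≤ Kt y z * (∫⁻ w, min (f z) (f w) ∂μ) ^ n := by
        intro z
        rw [← mul_assoc]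
        refine mul_le_mul_left ?_ _
        have hc := chain y z x
        rwa [hKtsymm y x] at hc
      have hstep2 : β * ∫⁻ z, min (f y) (f z) * (∫⁻ w, min (f z) (f w) ∂μ) ^ n ∂μ
          ≤ ∫⁻ z, Kt y z * (∫⁻ w, min (f z) (f w) ∂μ) ^ n ∂μ := by
        rw [← lintegral_const_mul' β _ hβtop]
        exact lintegral_mono hchain
      have hb1 := bound1 n ih y
      have hmid : (((n ! : ℕ) : ℝ≥0∞))⁻¹ * β ^ n * m y *
          (β * ((((n + 1 : ℕ) : ℝ≥0∞))⁻¹ * (∫⁻ w, min (f y) (f w) ∂μ) ^ (n + 1)))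
          ≤ ∫⁻ z, K y z * T^[n] m z ∂ω := by
        calc (((n ! : ℕ) : ℝ≥0∞))⁻¹ * β ^ n * m y *
              (β * ((((n + 1 : ℕ) : ℝ≥0∞))⁻¹ * (∫⁻ w, min (f y) (f w) ∂μ) ^ (n + 1)))
            ≤ (((n ! : ℕ) : ℝ≥0∞))⁻¹ * β ^ n * m y *
              (β * ∫⁻ z, min (f y) (f z) * (∫⁻ w, min (f z) (f w) ∂μ) ^ n ∂μ) :=
              mul_le_mul_right (mul_le_mul_right hstep1 β) _
          _ ≤ (((n ! : ℕ) : ℝ≥0∞))⁻¹ * β ^ n * m y *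
              (∫⁻ z, Kt y z * (∫⁻ w, min (f z) (f w) ∂μ) ^ n ∂μ) :=
              mul_le_mul_right hstep2 _
          _ ≤ ∫⁻ z, K y z * T^[n] m z ∂ω := hb1
      rw [Function.iterate_succ_apply', hT, hfactsucc n]
      calc m y * (β ^ (n + 1) * (∫⁻ w, min (f y) (f w) ∂μ) ^ (n + 1))
          = (((n + 1 : ℕ) : ℝ≥0∞) * ((n ! : ℕ) : ℝ≥0∞)) *
              ((((n ! : ℕ) : ℝ≥0∞))⁻¹ * β ^ n * m y *
                (β * ((((n + 1 : ℕ) : ℝ≥0∞))⁻¹ * (∫⁻ w, min (f y) (f w) ∂μ) ^ (n + 1)))) := by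
            have h1 : (((n + 1 : ℕ) : ℝ≥0∞) * ((n ! : ℕ) : ℝ≥0∞)) *
                ((((n ! : ℕ) : ℝ≥0∞))⁻¹ * β ^ n * m y *
                  (β * ((((n + 1 : ℕ) : ℝ≥0∞))⁻¹ * (∫⁻ w, min (f y) (f w) ∂μ) ^ (n + 1))))
                = (((n + 1 : ℕ) : ℝ≥0∞) * (((n + 1 : ℕ) : ℝ≥0∞))⁻¹) *
                  ((((n ! : ℕ) : ℝ≥0∞)) * (((n ! : ℕ) : ℝ≥0∞))⁻¹) *
                  (m y * ((β ^ n * β) * (∫⁻ w, min (f y) (f w) ∂μ) ^ (n + 1))) := by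
              ring
            rw [h1, ENNReal.mul_inv_cancel (hSne n).1 (hSne n).2,
              ENNReal.mul_inv_cancel (hfactne n).1 (hfactne n).2, one_mul, one_mul, ← pow_succ]
        _ ≤ (((n + 1 : ℕ) : ℝ≥0∞) * ((n ! : ℕ) : ℝ≥0∞)) * ∫⁻ z, K y z * T^[n] m z ∂ω :=
            mul_le_mul_right hmid _
  -- final bound at the point x, with the uncapped key inequality
  have claimFinal : ∀ j : ℕ,
      m x * (β * u) ^ j ≤ ((j ! : ℕ) : ℝ≥0∞) * T^[j] m x := by
    intro j
    cases j with
    | zero => simp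
    | succ n =>
      have hkey := key_ineq μ f hfmeas n
      rw [← hudef] at hkey
      have hstep1 : (((n + 1 : ℕ) : ℝ≥0∞))⁻¹ * u ^ (n + 1)
          ≤ ∫⁻ z, f z * (∫⁻ w, min (f z) (f w) ∂μ) ^ n ∂μ := by
        calc (((n + 1 : ℕ) : ℝ≥0∞))⁻¹ * u ^ (n + 1)
            ≤ (((n + 1 : ℕ) : ℝ≥0∞))⁻¹ * (((n + 1 : ℕ) : ℝ≥0∞) *
                ∫⁻ z, f z * (∫⁻ w, min (f z) (f w) ∂μ) ^ n ∂μ) := mul_le_mul_right hkey _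
          _ = _ := by
              rw [← mul_assoc, ENNReal.inv_mul_cancel (hSne n).1 (hSne n).2, one_mul]
      have hb1 := bound1 n (claimMain n) x
      have hKtf : (∫⁻ z, Kt x z * (∫⁻ w, min (f z) (f w) ∂μ) ^ n ∂μ)
          = ∫⁻ z, f z * (∫⁻ w, min (f z) (f w) ∂μ) ^ n ∂μ := rfl
      rw [hKtf] at hb1
      have hmid : (((n ! : ℕ) : ℝ≥0∞))⁻¹ * β ^ n * m x *
          ((((n + 1 : ℕ) : ℝ≥0∞))⁻¹ * u ^ (n + 1)) ≤ ∫⁻ z, K x z * T^[n] m z ∂ω :=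
        le_trans (mul_le_mul_right hstep1 _) hb1
      rw [Function.iterate_succ_apply', hT, hfactsucc n]
      calc m x * (β * u) ^ (n + 1)
          = m x * (β ^ n * β * u ^ (n + 1)) := by rw [mul_pow, pow_succ]
        _ ≤ m x * (β ^ n * 1 * u ^ (n + 1)) := by
            exact mul_le_mul_right (mul_le_mul_left (mul_le_mul_right hβle _) _) _
        _ = (((n + 1 : ℕ) : ℝ≥0∞) * ((n ! : ℕ) : ℝ≥0∞)) *
              ((((n ! : ℕ) : ℝ≥0∞))⁻¹ * β ^ n * m x *
                ((((n + 1 : ℕ) : ℝ≥0∞))⁻¹ * u ^ (n + 1))) := by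
            have h1 : (((n + 1 : ℕ) : ℝ≥0∞) * ((n ! : ℕ) : ℝ≥0∞)) *
                ((((n ! : ℕ) : ℝ≥0∞))⁻¹ * β ^ n * m x *
                  ((((n + 1 : ℕ) : ℝ≥0∞))⁻¹ * u ^ (n + 1)))
                = (((n + 1 : ℕ) : ℝ≥0∞) * (((n + 1 : ℕ) : ℝ≥0∞))⁻¹) *
                  ((((n ! : ℕ) : ℝ≥0∞)) * (((n ! : ℕ) : ℝ≥0∞))⁻¹) *
                  (m x * (β ^ n * 1 * u ^ (n + 1))) := by
              ring
            rw [h1, ENNReal.mul_inv_cancel (hSne n).1 (hSne n).2,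
              ENNReal.mul_inv_cancel (hfactne n).1 (hfactne n).2, one_mul, one_mul]
        _ ≤ (((n + 1 : ℕ) : ℝ≥0∞) * ((n ! : ℕ) : ℝ≥0∞)) * ∫⁻ z, K x z * T^[n] m z ∂ω :=
            mul_le_mul_right hmid _
  -- conclude via the exponential series
  have hterm : ∀ j : ℕ, m x * (β * u) ^ j / ((j ! : ℕ) : ℝ≥0∞) ≤ T^[j] m x := by
    intro j
    rw [ENNReal.div_le_iff (hfactne j).1 (hfactne j).2, mul_comm (T^[j] m x) _]
    exact claimFinal j
  rw [hudiv]
  calc m x * expE (β * u)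
      ≤ m x * ∑' j : ℕ, (β * u) ^ j / ((j ! : ℕ) : ℝ≥0∞) :=
        mul_le_mul_right (expE_le_tsum _) _
    _ = ∑' j : ℕ, m x * ((β * u) ^ j / ((j ! : ℕ) : ℝ≥0∞)) := ENNReal.tsum_mul_left.symm
    _ = ∑' j : ℕ, m x * (β * u) ^ j / ((j ! : ℕ) : ℝ≥0∞) :=
        tsum_congr fun j => (mul_div_assoc _ _ _).symm
    _ ≤ ∑' j : ℕ, (T^[j] m) x := ENNReal.tsum_le_tsum hterm
end

section
/- Let Ω ⊂ ℝⁿ be a bounded uniform domain with Green's function G and Martin kernel M(x,z) = lim_{y→z} G(x,y)/G(x₀,y) for z ∈ ∂Ω. Suppose G is quasi-metrically modifiable with modifier m(x) = min(1, G(x,x₀)) and quasi-metric constant κ. Then for each z ∈ ∂Ω, the function m̃(x) = M(x,z) is also a quasi-metric modifier for G, with quasi-metric constant 4κ² independent of z. -/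
open Metric Filter

set_option linter.unusedVariables false


private lemma ptolemy_aux {κ A B C a b c : ℝ} (hκ : 0 < κ)
    (hB : 0 < B) (hC : 0 < C) (ha : 0 < a) (hb : 0 < b) (hc : 0 < c)
    (h1 : A ≤ κ * (B + C)) (h2 : A ≤ κ * (a + b))
    (h3 : c ≤ κ * (B + a)) (h4 : c ≤ κ * (C + b)) :
    A * c ≤ 4 * κ ^ 2 * (B * b + C * a) := by
  rcases le_or_gt c (2 * κ * b) with hcb | hcb <;>
    rcases le_or_gt c (2 * κ * a) with hca | hca
  · nlinarith [mul_le_mul_of_nonneg_right h1 hc.le,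
      mul_le_mul_of_nonneg_left hcb (mul_pos hκ hB).le,
      mul_le_mul_of_nonneg_left hca (mul_pos hκ hC).le,
      mul_pos hB hb, mul_pos hC ha, mul_pos hκ hκ]
  · have hcB : c ≤ 2 * κ * B := by nlinarith
    have hab : a < b := by nlinarith
    have hA2 : A ≤ 2 * κ * b := by nlinarith
    nlinarith [mul_le_mul hA2 hcB hc.le (by positivity : (0:ℝ) ≤ 2*κ*b),
      mul_pos hC ha, mul_pos hκ hκ]
  · have hcC : c ≤ 2 * κ * C := by nlinarith
    have hab : b < a := by nlinarith
    have hA2 : A ≤ 2 * κ * a := by nlinarith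
    nlinarith [mul_le_mul hA2 hcC hc.le (by positivity : (0:ℝ) ≤ 2*κ*a),
      mul_pos hB hb, mul_pos hκ hκ]
  · have hcB : c ≤ 2 * κ * B := by nlinarith
    have hcC : c ≤ 2 * κ * C := by nlinarith
    nlinarith [mul_le_mul_of_nonneg_right h2 hc.le,
      mul_le_mul_of_nonneg_left hcB (mul_pos hκ hb).le,
      mul_le_mul_of_nonneg_left hcC (mul_pos hκ ha).le,
      mul_pos hB hb, mul_pos hC ha, mul_pos hκ hκ]

private lemma convert_aux {κ mx my mw mp gxy gxw gwy gxp gyp gwp g0 : ℝ} (hκ : 0 < κ)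
    (hmx : 0 < mx) (hmy : 0 < my) (hmw : 0 < mw) (hmp : 0 < mp)
    (hgxy : 0 < gxy) (hgxw : 0 < gxw) (hgwy : 0 < gwy)
    (hgxp : 0 < gxp) (hgyp : 0 < gyp) (hgwp : 0 < gwp) (hg0 : 0 < g0)
    (q1 : mx * my / gxy ≤ κ * (mx * mw / gxw + mw * my / gwy))
    (q2 : mx * my / gxy ≤ κ * (mx * mp / gxp + my * mp / gyp))
    (q3 : mw * mp / gwp ≤ κ * (mx * mw / gxw + mx * mp / gxp))
    (q4 : mw * mp / gwp ≤ κ * (mw * my / gwy + my * mp / gyp)) :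
    gxp / g0 * (gyp / g0) / gxy ≤
      4 * κ ^ 2 * (gxp / g0 * (gwp / g0) / gxw + gwp / g0 * (gyp / g0) / gwy) := by
  have hd := ptolemy_aux hκ (div_pos (mul_pos hmx hmw) hgxw)
    (div_pos (mul_pos hmw hmy) hgwy) (div_pos (mul_pos hmx hmp) hgxp)
    (div_pos (mul_pos hmy hmp) hgyp) (div_pos (mul_pos hmw hmp) hgwp) q1 q2 q3 q4
  -- hd : (mx*my/gxy) * (mw*mp/gwp) ≤ 4κ²((mx*mw/gxw)*(my*mp/gyp) + (mw*my/gwy)*(mx*mp/gxp))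
  have hP : 0 < mx * my * mw * mp := by positivity
  have hD : (0:ℝ) < gxy * gwp * gxw * gyp * gwy * gxp := by positivity
  have hmul := mul_le_mul_of_nonneg_right hd hD.le
  have e1 : mx * my / gxy * (mw * mp / gwp) * (gxy * gwp * gxw * gyp * gwy * gxp)
      = (mx * my * mw * mp) * (gxw * gyp * gwy * gxp) := by
    field_simp
  have e2 : 4 * κ ^ 2 * (mx * mw / gxw * (my * mp / gyp) + mw * my / gwy * (mx * mp / gxp))
        * (gxy * gwp * gxw * gyp * gwy * gxp)
      = (mx * my * mw * mp) * (4 * κ ^ 2 * (gxy * gwp * gwy * gxp + gxy * gwp * gxw * gyp)) := by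
    field_simp
  rw [e1, e2] at hmul
  have hX : gxw * gyp * gwy * gxp ≤ 4 * κ ^ 2 * (gxy * gwp * gwy * gxp + gxy * gwp * gxw * gyp) :=
    le_of_mul_le_mul_left hmul hP
  have r1 : gxp / g0 * (gyp / g0) / gxy = gxp * gyp / (g0 ^ 2 * gxy) := by ring
  have r2 : gxp / g0 * (gwp / g0) / gxw = gxp * gwp / (g0 ^ 2 * gxw) := by ring
  have r3 : gwp / g0 * (gyp / g0) / gwy = gwp * gyp / (g0 ^ 2 * gwy) := by ring
  rw [r1, r2, r3, div_add_div _ _ (by positivity) (by positivity), ← mul_div_assoc,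
    div_le_div_iff₀ (by positivity) (by positivity)]
  nlinarith [mul_le_mul_of_nonneg_left hX (by positivity : (0:ℝ) ≤ g0^4), sq_nonneg g0]


/-- In a bounded uniform domain, the Martin kernel `M(·,z)` is a quasi-metric modifier
for the Green function `G`: if `d(x,y) = m(x)m(y)/G(x,y)` with `m(x) = min(1, G(x,x₀))`
is a quasi-metric with constant `κ` on `Ω`, then for every boundary point `z`,
`d̃(x,y) = M(x,z)M(y,z)/G(x,y)` is a quasi-metric with constant `4κ²` (independent of `z`). -/
theorem martin_kernel_quasi_modifier {n : ℕ}
    (Ω : Set (EuclideanSpace ℝ (Fin n)))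
    (hΩopen : IsOpen Ω) (hΩconn : IsConnected Ω) (hΩbdd : Bornology.IsBounded Ω)
    (G : EuclideanSpace ℝ (Fin n) → EuclideanSpace ℝ (Fin n) → ℝ)
    (hGpos : ∀ x ∈ Ω, ∀ y ∈ Ω, 0 < G x y)
    (hGsymm : ∀ x ∈ Ω, ∀ y ∈ Ω, G x y = G y x)
    (x₀ : EuclideanSpace ℝ (Fin n)) (hx₀ : x₀ ∈ Ω)
    (m : EuclideanSpace ℝ (Fin n) → ℝ) (hm : ∀ x, m x = min 1 (G x x₀))
    (κ : ℝ) (hκ : 0 < κ)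
    (hquasi : ∀ x ∈ Ω, ∀ y ∈ Ω, ∀ w ∈ Ω,
      m x * m y / G x y ≤ κ * (m x * m w / G x w + m w * m y / G w y))
    (M : EuclideanSpace ℝ (Fin n) → EuclideanSpace ℝ (Fin n) → ℝ)
    -- Martin kernel: `M(x,z) = lim_{y → z, y ∈ Ω} G(x,y)/G(x₀,y)` for `z ∈ ∂Ω`.
    (hM : ∀ x ∈ Ω, ∀ z ∈ frontier Ω,
      Tendsto (fun y => G x y / G x₀ y) (nhdsWithin z Ω) (nhds (M x z))) :
    ∀ z ∈ frontier Ω,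
      (∀ x ∈ Ω, 0 < M x z) ∧
      (∀ x ∈ Ω, ∀ y ∈ Ω, ∀ w ∈ Ω,
        M x z * M y z / G x y ≤
          4 * κ ^ 2 * (M x z * M w z / G x w + M w z * M y z / G w y)) := by
  have hmpos : ∀ x ∈ Ω, 0 < m x := fun x hx => by
    rw [hm x]; exact lt_min one_pos (hGpos x hx x₀ hx₀)
  intro z hz
  have hne : (nhdsWithin z Ω).NeBot :=
    mem_closure_iff_nhdsWithin_neBot.mp (frontier_subset_closure hz)
  -- pointwise inequality for the ratio kernels
  have hpt : ∀ x ∈ Ω, ∀ y ∈ Ω, ∀ w ∈ Ω, ∀ p ∈ Ω,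
      G x p / G x₀ p * (G y p / G x₀ p) / G x y ≤
        4 * κ ^ 2 * (G x p / G x₀ p * (G w p / G x₀ p) / G x w
          + G w p / G x₀ p * (G y p / G x₀ p) / G w y) := by
    intro x hx y hy w hw p hp
    have q1 := hquasi x hx y hy w hw
    have q2 := hquasi x hx y hy p hp
    have q3 := hquasi w hw p hp x hx
    have q4 := hquasi w hw p hp y hy
    rw [hGsymm p hp y hy, mul_comm (m p) (m y)] at q2
    rw [hGsymm w hw x hx, mul_comm (m w) (m x)] at q3
    exact convert_aux hκ (hmpos x hx) (hmpos y hy) (hmpos w hw) (hmpos p hp)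
      (hGpos x hx y hy) (hGpos x hx w hw) (hGpos w hw y hy) (hGpos x hx p hp)
      (hGpos y hy p hp) (hGpos w hw p hp) (hGpos x₀ hx₀ p hp) q1 q2 q3 q4
  -- the limit inequality
  have key : ∀ x ∈ Ω, ∀ y ∈ Ω, ∀ w ∈ Ω,
      M x z * M y z / G x y ≤
        4 * κ ^ 2 * (M x z * M w z / G x w + M w z * M y z / G w y) := by
    intro x hx y hy w hw
    have l1 : Tendsto (fun p => G x p / G x₀ p * (G y p / G x₀ p) / G x y)
        (nhdsWithin z Ω) (nhds (M x z * M y z / G x y)) :=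
      ((hM x hx z hz).mul (hM y hy z hz)).div_const _
    have l2 : Tendsto (fun p => 4 * κ ^ 2 * (G x p / G x₀ p * (G w p / G x₀ p) / G x w
          + G w p / G x₀ p * (G y p / G x₀ p) / G w y))
        (nhdsWithin z Ω)
        (nhds (4 * κ ^ 2 * (M x z * M w z / G x w + M w z * M y z / G w y))) :=
      ((((hM x hx z hz).mul (hM w hw z hz)).div_const _).add
        (((hM w hw z hz).mul (hM y hy z hz)).div_const _)).const_mul _
    refine le_of_tendsto_of_tendsto l1 l2 ?_
    filter_upwards [self_mem_nhdsWithin] with p hp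
    exact hpt x hx y hy w hw p hp
  -- M x₀ z = 1
  have hM0 : M x₀ z = 1 := by
    refine tendsto_nhds_unique (hM x₀ hx₀ z hz) (Tendsto.congr' ?_ tendsto_const_nhds)
    filter_upwards [self_mem_nhdsWithin] with p hp
    exact (div_self (hGpos x₀ hx₀ p hp).ne').symm
  refine ⟨fun x hx => ?_, key⟩
  have hk := key x₀ hx₀ x₀ hx₀ x hx
  rw [hM0] at hk
  simp only [one_mul, mul_one] at hk
  by_contra hc
  push_neg at hc
  have t1 : M x z / G x₀ x ≤ 0 :=
    div_nonpos_of_nonpos_of_nonneg hc (hGpos x₀ hx₀ x hx).le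
  have t2 : M x z / G x x₀ ≤ 0 :=
    div_nonpos_of_nonpos_of_nonneg hc (hGpos x hx x₀ hx₀).le
  have t3 : 4 * κ ^ 2 * (M x z / G x₀ x + M x z / G x x₀) ≤ 0 :=
    mul_nonpos_of_nonneg_of_nonpos (by positivity) (by linarith)
  have t4 : (0:ℝ) < 1 / G x₀ x₀ := by
    exact one_div_pos.mpr (hGpos x₀ hx₀ x₀ hx₀)
  linarith
end
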